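/- Suppose the hyperplanes W_1,...,W_{2d-2} in R^d do phase retrieval, and write W_i^⊥ = span{φ_i} with φ_i ≠ 0. Then {φ_i}_{i=1}^{2d-2} is full spark: every d-element subset is linearly independent. -/

import Mathlib

open scoped InnerProductSpace

/-- If `2d - 2` hyperplanes do phase retrieval in `ℝ^d`, then the spanning vectors of
their orthogonal complements are full spark. -/
theorem minimal_hyperplanes_full_spark (d : ℕ)
    (W : Fin (2 * d - 2) → Submodule ℝ (EuclideanSpace ℝ (Fin d)))
    (hdim : ∀ i, Module.finrank ℝ (W i) = d - 1)
    (hPR : ∀ x : EuclideanSpace ℝ (Fin d), x ≠ 0 →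
      Submodule.span ℝ
        (Set.range fun i => (Submodule.orthogonalProjection (W i) x : EuclideanSpace ℝ (Fin d))) = ⊤)
    (φ : Fin (2 * d - 2) → EuclideanSpace ℝ (Fin d))
    (hφ : ∀ i, φ i ≠ 0)
    (hperp : ∀ i, (W i)ᗮ = ℝ ∙ φ i) :
    ∀ s : Finset (Fin (2 * d - 2)), s.card = d →
      LinearIndependent ℝ (fun i : s => φ i) := by
  intro s hs
  classical
  -- small cases
  rcases Nat.eq_zero_or_pos d with hd0 | hdpos
  · subst hd0
    have : s = ∅ := Finset.card_eq_zero.mp hs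
    subst this
    haveI : IsEmpty ((∅ : Finset (Fin (2 * 0 - 2))) : Type) := by
      constructor; rintro ⟨i, hi⟩; simp at hi
    exact linearIndependent_empty_type
  have hcard : s.card ≤ 2 * d - 2 := by
    simpa using Finset.card_le_card (Finset.subset_univ s)
  have hd2 : 2 ≤ d := by omega
  by_contra hnot
  -- the span of the chosen vectors has rank < d
  set S : Submodule ℝ (EuclideanSpace ℝ (Fin d)) :=
    Submodule.span ℝ (↑(s.image φ) : Set (EuclideanSpace ℝ (Fin d))) with hS
  have hrange : Set.range (fun i : s => φ i) = ↑(s.image φ) := by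
    ext v; simp
  have hSlt : Module.finrank ℝ S < d := by
    have hle : Module.finrank ℝ S ≤ (s.image φ).card :=
      finrank_span_finset_le_card _
    have hle' : Module.finrank ℝ S ≤ d :=
      hle.trans (le_trans (Finset.card_image_le) hs.le)
    rcases lt_or_eq_of_le hle' with h | h
    · exact h
    · exfalso
      apply hnot
      rw [linearIndependent_iff_card_eq_finrank_span]
      rw [Set.finrank, hrange, ← hS, h]
      simp [hs]
  -- pick a nonzero vector orthogonal to all of them
  have horth : Module.finrank ℝ S + Module.finrank ℝ Sᗮ = d := by
    have := Submodule.finrank_add_finrank_orthogonal S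
    simpa [finrank_euclideanSpace_fin] using this
  have hbot : Sᗮ ≠ ⊥ := by
    intro h
    rw [h] at horth
    simp at horth
    omega
  obtain ⟨x, hxS, hx0⟩ := Submodule.exists_mem_ne_zero_of_ne_bot hbot
  -- for i ∈ s, the projection fixes x
  have hproj : ∀ i : Fin (2 * d - 2), i ∈ s →
      (Submodule.orthogonalProjection (W i) x : EuclideanSpace ℝ (Fin d)) = x := by
    intro i hi
    rw [← Submodule.starProjection_apply, Submodule.starProjection_eq_self_iff]
    rw [← Submodule.orthogonal_orthogonal (W i), hperp i]
    rw [Submodule.mem_orthogonal_singleton_iff_inner_right]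
    exact hxS (φ i) (Submodule.subset_span (by exact Finset.mem_coe.mpr (Finset.mem_image.mpr ⟨i, hi, rfl⟩)))
  -- all projections lie in a small subspace
  set T : Submodule ℝ (EuclideanSpace ℝ (Fin d)) :=
    (ℝ ∙ x) ⊔ Submodule.span ℝ (↑(sᶜ.image φ) : Set (EuclideanSpace ℝ (Fin d))) with hT
  have hmem : ∀ i, (Submodule.orthogonalProjection (W i) x : EuclideanSpace ℝ (Fin d)) ∈ T := by
    intro i
    by_cases hi : i ∈ s
    · rw [hproj i hi]
      exact Submodule.mem_sup_left (Submodule.mem_span_singleton_self x)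
    · have h1 : x - (Submodule.orthogonalProjection (W i) x : EuclideanSpace ℝ (Fin d)) ∈ ℝ ∙ φ i := by
        rw [← hperp i]; exact Submodule.sub_starProjection_mem_orthogonal x
      have h2 : (ℝ ∙ φ i : Submodule ℝ (EuclideanSpace ℝ (Fin d))) ≤
          Submodule.span ℝ (↑(sᶜ.image φ) : Set (EuclideanSpace ℝ (Fin d))) := by
        apply Submodule.span_mono
        intro v hv
        simp only [Set.mem_singleton_iff] at hv
        subst hv
        exact Finset.mem_coe.mpr (Finset.mem_image.mpr ⟨i, Finset.mem_compl.mpr hi, rfl⟩)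
      have : (Submodule.orthogonalProjection (W i) x : EuclideanSpace ℝ (Fin d)) =
          x - (x - (Submodule.orthogonalProjection (W i) x : EuclideanSpace ℝ (Fin d))) :=
        (sub_sub_cancel x _).symm
      rw [this]
      exact Submodule.sub_mem _
        (Submodule.mem_sup_left (Submodule.mem_span_singleton_self x))
        (Submodule.mem_sup_right (h2 h1))
  have hTtop : T = ⊤ := by
    rw [eq_top_iff, ← hPR x hx0, Submodule.span_le]
    rintro v ⟨i, rfl⟩
    exact hmem i
  -- but T has rank at most d - 1
  have hT1 : Module.finrank ℝ (ℝ ∙ x : Submodule ℝ (EuclideanSpace ℝ (Fin d))) = 1 :=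
    finrank_span_singleton hx0
  have hT2 : Module.finrank ℝ
      (Submodule.span ℝ (↑(sᶜ.image φ) : Set (EuclideanSpace ℝ (Fin d)))) ≤ d - 2 := by
    refine le_trans (finrank_span_finset_le_card _) ?_
    refine le_trans Finset.card_image_le ?_
    have : sᶜ.card = (2 * d - 2) - d := by
      have := Finset.card_compl s
      simpa [hs] using this
    omega
  have hTle : Module.finrank ℝ T ≤ d - 1 := by
    rw [hT]
    have h := Submodule.finrank_sup_add_finrank_inf_eq (ℝ ∙ x)
      (Submodule.span ℝ (↑(sᶜ.image φ) : Set (EuclideanSpace ℝ (Fin d))))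
    rw [hT1] at h
    omega
  rw [hTtop] at hTle
  have : Module.finrank ℝ (⊤ : Submodule ℝ (EuclideanSpace ℝ (Fin d))) = d := by
    simp [finrank_euclideanSpace_fin]
  omega
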